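/- Let G be a compact Hausdorff topological group and T : G → G a surjective continuous group homomorphism. If N is an open normal subgroup of G with T(N) ⊆ N, then T⁻¹(N) = N. -/

import Mathlib

theorem stmt10 {G : Type*} [Group G] [TopologicalSpace G] [IsTopologicalGroup G]
    [CompactSpace G] [T2Space G]
    (T : G →* G) (hc : Continuous T) (hs : Function.Surjective T)
    (N : Subgroup G) (hN : N.Normal) (ho : IsOpen (N : Set G))
    (hTN : ⇑T '' (N : Set G) ⊆ (N : Set G)) :
    ⇑T ⁻¹' (N : Set G) = (N : Set G) := by
  have hle : N ≤ N.comap T := fun x hx => hTN ⟨x, hx, rfl⟩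
  have hfin : Finite (G ⧸ N) := Subgroup.quotient_finite_of_isOpen N ho
  have : N.FiniteIndex := Subgroup.finiteIndex_of_finite_quotient (H := N)
  have hidx : (N.comap T).index = N.index := Subgroup.index_comap_of_surjective N hs
  have heq : N = N.comap T := by
    rcases eq_or_lt_of_le hle with h | h
    · exact h
    · exact absurd (hidx ▸ Subgroup.index_strictAnti h) (lt_irrefl _)
  rw [← Subgroup.coe_comap, ← heq]
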